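/- The Brown-von Neumann-Nash rule T_{ij}(x,p) = [p_j - p'x]_+ induces a mean dynamic V_i(x,p) = [p_i - p'x]_+ - x_i sum_j [p_j - p'x]_+, which satisfies Nash stationarity: V(x,p) = 0 if and only if x in argmax_{y in X} y'p. -/
import Mathlib


open scoped BigOperators

/-- The probability simplex in `ℝ^n`. -/
def simplex (n : ℕ) : Set (Fin n → ℝ) := stdSimplex ℝ (Fin n)

/-- Dot product `p'x`. -/
def dot {n : ℕ} (p x : Fin n → ℝ) : ℝ := ∑ i, p i * x i

/-- Best response set `B(p) = argmax_{y ∈ X} y'p`. -/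
def BR {n : ℕ} (p : Fin n → ℝ) : Set (Fin n → ℝ) :=
  {x ∈ simplex n | ∀ y ∈ simplex n, dot y p ≤ dot x p}

/-- Mean dynamic induced by the Brown-von Neumann-Nash rule
`T_ij(x,p) = [p_j - p'x]_+`. -/
def bnnV {n : ℕ} (x p : Fin n → ℝ) : Fin n → ℝ :=
  fun i => max 0 (p i - dot p x) - x i * ∑ j, max 0 (p j - dot p x)

theorem stmt_5 {n : ℕ} (hn : 0 < n) (x p : Fin n → ℝ) (hx : x ∈ simplex n) :
    bnnV x p = 0 ↔ x ∈ BR p := by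
  have hx1 : ∑ i, x i = 1 := hx.2
  have hxn : ∀ i, 0 ≤ x i := fun i => hx.1 i
  have hdot : dot x p = dot p x := by
    simp [dot, mul_comm]
  constructor
  · intro hV
    set s := dot p x with hs
    have hgi : ∀ i, max 0 (p i - s) = x i * ∑ j, max 0 (p j - s) := by
      intro i
      have := congrFun hV i
      simp only [bnnV, Pi.zero_apply] at this
      linarith
    have hsum0 : ∑ i, max 0 (p i - s) * (p i - s) = 0 := by
      have : ∑ i, max 0 (p i - s) * (p i - s)
          = (∑ j, max 0 (p j - s)) * (∑ i, x i * (p i - s)) := by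
        rw [Finset.mul_sum]
        refine Finset.sum_congr rfl fun i _ => ?_
        rw [hgi i]; ring
      rw [this]
      have h2 : ∑ i, x i * (p i - s) = 0 := by
        have : ∑ i, x i * (p i - s) = (∑ i, p i * x i) - s * ∑ i, x i := by
          rw [Finset.mul_sum, ← Finset.sum_sub_distrib]
          exact Finset.sum_congr rfl fun i _ => by ring
        rw [this, hx1]
        simp [hs, dot]
      rw [h2, mul_zero]
    have hle : ∀ i, p i ≤ s := by
      intro i
      by_contra h
      push_neg at h
      have hpos : ∀ j ∈ Finset.univ, 0 ≤ max 0 (p j - s) * (p j - s) := by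
        intro j _
        rcases le_or_gt (p j - s) 0 with hj | hj
        · simp [max_eq_left hj]
        · positivity
      have hz := (Finset.sum_eq_zero_iff_of_nonneg hpos).mp hsum0 i (Finset.mem_univ i)
      have : max 0 (p i - s) = p i - s := max_eq_right (by linarith)
      rw [this] at hz
      nlinarith
    refine ⟨hx, fun y hy => ?_⟩
    rw [hdot]
    calc dot y p = ∑ i, y i * p i := rfl
      _ ≤ ∑ i, y i * s := Finset.sum_le_sum fun i _ =>
          mul_le_mul_of_nonneg_left (hle i) (hy.1 i)
      _ = s := by rw [← Finset.sum_mul, hy.2, one_mul]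
  · intro hBR
    have hle : ∀ i, p i ≤ dot p x := by
      intro i
      have hsingle : Pi.single i (1:ℝ) ∈ simplex n := by
        constructor
        · intro j
          rcases eq_or_ne j i with rfl | hj
          · simp
          · simp [Pi.single_eq_of_ne hj]
        · simp [Finset.sum_pi_single]
      have := hBR.2 _ hsingle
      rw [hdot] at this
      simpa [dot, Pi.single_apply, Finset.sum_ite_eq', mul_comm] using this
    funext i
    have h0 : ∀ j, max 0 (p j - dot p x) = 0 := fun j =>
      max_eq_left (by linarith [hle j])
    simp [bnnV, h0]
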